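/- Fix M > 0 and let V_L(r) = (1/r²)(1 − 2M/r). Then for all r > 2M the angular trapping term satisfies the identity 2V_L(r) + r_*(r)·(1 − 2M/r)·(dV_L/dr)(r) = (2/r⁴)(1 − 2M/r)(r² − r_*(r)(r − 3M)), and there exists R > 0 such that this quantity is nonpositive for every r ∈ (2M, ∞) with |r_*(r)| ≥ R; in other words, the trapping term 2V_L + r_* (dV_L/dr_*) is positive only in a compact region of the tortoise coordinate. -/

import Mathlib

/-- Fix `M > 0` and let `V_L(r) = (1/r²)(1 − 2M/r)`.  Then for all
`r > 2M` the angular trapping term satisfies the identity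
`2V_L(r) + r_*(r)·(1 − 2M/r)·(dV_L/dr)(r) = (2/r⁴)(1 − 2M/r)(r² − r_*(r)(r − 3M))`,
and there exists `R > 0` such that this quantity is nonpositive for every
`r ∈ (2M, ∞)` with `|r_*(r)| ≥ R`; in other words, the trapping term
`2V_L + r_* (dV_L/dr_*)` is positive only in a compact region of the tortoise
coordinate. -/
theorem angular_trapping_term_compact_support (M : ℝ) (hM : 0 < M)
    (rstar : ℝ → ℝ)
    (hrstar : ∀ r : ℝ, rstar r =
      r + 2 * M * Real.log ((r - 2 * M) / (2 * M)) - 3 * M + 2 * M * Real.log 2)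
    (VL : ℝ → ℝ) (hVL : ∀ r : ℝ, VL r = (1 / r ^ 2) * (1 - 2 * M / r)) :
    (∀ r : ℝ, 2 * M < r →
      2 * VL r + rstar r * ((1 - 2 * M / r) * deriv VL r)
        = (2 / r ^ 4) * (1 - 2 * M / r) * (r ^ 2 - rstar r * (r - 3 * M))) ∧
    (∃ R : ℝ, 0 < R ∧ ∀ r : ℝ, 2 * M < r → R ≤ |rstar r| →
      2 * VL r + rstar r * ((1 - 2 * M / r) * deriv VL r) ≤ 0) := by
  have hVLe : VL = fun r : ℝ => (1 / r ^ 2) * (1 - 2 * M / r) := funext hVL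
  have key : ∀ r : ℝ, 2 * M < r →
      2 * VL r + rstar r * ((1 - 2 * M / r) * deriv VL r)
        = (2 / r ^ 4) * (1 - 2 * M / r) * (r ^ 2 - rstar r * (r - 3 * M)) := by
    intro r hr
    have hr0 : (0:ℝ) < r := by linarith
    have hrne : r ≠ 0 := ne_of_gt hr0
    have hD : HasDerivAt VL ((2 * (3 * M - r)) / r ^ 4) r := by
      rw [hVLe]
      have h1 : HasDerivAt (fun x : ℝ => 1 / x ^ 2) (-(2 * r) / (r ^ 2) ^ 2) r := by
        simpa [one_div, Pi.inv_def] using ((hasDerivAt_pow 2 r).inv (pow_ne_zero 2 hrne))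
      have h2 : HasDerivAt (fun x : ℝ => 2 * M / x) ((0 * r - 2 * M * 1) / r ^ 2) r :=
        (hasDerivAt_const r (2 * M)).div (hasDerivAt_id r) hrne
      have h3 : HasDerivAt (fun x : ℝ => 1 - 2 * M / x)
          (-((0 * r - 2 * M * 1) / r ^ 2)) r := h2.const_sub 1
      have : HasDerivAt (fun x : ℝ => 1 / x ^ 2 * (1 - 2 * M / x)) _ r := h1.fun_mul h3
      convert this using 1
      field_simp
      ring
    rw [hVL r, hD.deriv]
    field_simp
    ring
  refine ⟨key, ?_⟩
  have mono : ∀ a b : ℝ, 2 * M < a → a < b → rstar a < rstar b := by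
    intro a b ha hab
    have h1 : Real.log ((a - 2 * M) / (2 * M)) < Real.log ((b - 2 * M) / (2 * M)) := by
      exact Real.log_lt_log (div_pos (by linarith) (by linarith)) <| (div_lt_div_iff_of_pos_right (by linarith : (0:ℝ) < 2 * M)).2 (by linarith)
    rw [hrstar, hrstar]
    nlinarith [h1]
  set r1 : ℝ := 2 * M + M * Real.exp 8 with hr1def
  have hexp8 : (9:ℝ) ≤ Real.exp 8 := by
    have := Real.add_one_le_exp (8:ℝ); linarith
  refine ⟨13 * M + |rstar (5 * M / 2)| + |rstar r1|, by positivity, ?_⟩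
  intro r hr habs
  have hr0 : (0:ℝ) < r := by linarith
  have hpot : 0 < 1 - 2 * M / r := by
    have : 2 * M / r < 1 := (div_lt_one hr0).2 hr
    linarith
  rw [key r hr]
  have hfac : r ^ 2 - rstar r * (r - 3 * M) ≤ 0 := by
    rcases le_abs.mp habs with h | h
    · -- rstar r large positive, so r ≥ r1
      have hrr1 : r1 ≤ r := by
        by_contra h'
        push_neg at h'
        have := mono r r1 hr h'
        have := le_abs_self (rstar r1)
        have := abs_nonneg (rstar (5 * M / 2))
        linarith
      have h11 : 11 * M ≤ r := by
        rw [hr1def] at hrr1; nlinarith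
      have hlog : (8 : ℝ) - Real.log 2 ≤ Real.log ((r - 2 * M) / (2 * M)) := by
        rw [Real.le_log_iff_exp_le (div_pos (by linarith) (by linarith))]
        rw [Real.exp_sub, Real.exp_log (by norm_num)]
        rw [div_le_div_iff₀ (by norm_num) (by linarith)]
        rw [hr1def] at hrr1
        nlinarith
      have hs : r + 13 * M ≤ rstar r := by
        rw [hrstar]; nlinarith
      have h3M : 0 ≤ r - 3 * M := by linarith
      have := mul_le_mul_of_nonneg_right hs h3M
      nlinarith
    · -- rstar r large negative, so r ≤ 5M/2
      have hrsmall : r ≤ 5 * M / 2 := by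
        by_contra h'
        push_neg at h'
        have := mono (5 * M / 2) r (by linarith) h'
        have := neg_abs_le (rstar (5 * M / 2))
        have := abs_nonneg (rstar r1)
        linarith
      have hrsneg : rstar r ≤ -(13 * M) := by
        have := abs_nonneg (rstar (5 * M / 2))
        have := abs_nonneg (rstar r1)
        linarith
      nlinarith [mul_le_mul (show (13 * M : ℝ) ≤ -rstar r by linarith)
        (show M / 2 ≤ 3 * M - r by linarith) (by linarith : (0:ℝ) ≤ M / 2)
        (by linarith : (0:ℝ) ≤ -rstar r)]
  have hpos : (0:ℝ) < 2 / r ^ 4 := by positivity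
  calc (2 / r ^ 4) * (1 - 2 * M / r) * (r ^ 2 - rstar r * (r - 3 * M))
      ≤ 0 := mul_nonpos_of_nonneg_of_nonpos (by positivity) hfac
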